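/- arXiv:0708.0136 — 2 statements merged into one kernel-verified Lean document; each statement's English description precedes it below -/
import Mathlib

section
/- Let x be an n×n real upper-triangular unipotent matrix and fix indices i < j and k < l. Then the sum over all pairs (r,s) with r < s of the product of the (i,j) entry of x·E_{rs} and the (k,l) entry of x·E_{rs} equals δ_{jl} times the sum over r with max(i,k) ≤ r < l of x_{ir} x_{kr}. -/
open Matrix in
/-- For an upper-triangular unipotent matrix `x` and indices `i < j`, `k < l`, the sum over all
pairs `(r,s)` with `r < s` of `(x·E_{rs})_{ij} (x·E_{rs})_{kl}` equals
`δ_{jl} ∑_{max i k ≤ r < l} x_{ir} x_{kr}`. -/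
theorem kappa_coordinate_functions (n : ℕ) (x : Matrix (Fin n) (Fin n) ℝ)
    (hx : x.BlockTriangular id) (hx1 : ∀ i, x i i = 1)
    (i j k l : Fin n) (hij : i < j) (hkl : k < l) :
    (∑ r : Fin n, ∑ s : Fin n,
        if r < s then
          (x * single r s (1 : ℝ)) i j * (x * single r s (1 : ℝ)) k l
        else 0) =
      (if j = l then (1 : ℝ) else 0) *
        ∑ r : Fin n, if max i k ≤ r ∧ r < l then x i r * x k r else 0 := by
  have key : ∀ (r s a b : Fin n), (x * single r s (1:ℝ)) a b
      = if s = b then x a r else 0 := by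
    intro r s a b
    by_cases h : s = b
    · subst h; simp [mul_apply, Matrix.single, ite_and]
    · simp [mul_apply, Matrix.single, ite_and, h]
  simp only [key]
  rw [Finset.sum_comm]
  have hs : ∀ s : Fin n, (∑ r : Fin n, if r < s then
      (if s = j then x i r else 0) * (if s = l then x k r else 0) else 0)
      = if s = j ∧ s = l then ∑ r : Fin n, if r < s then x i r * x k r else 0 else 0 := by
    intro s
    by_cases h1 : s = j <;> by_cases h2 : s = l <;> simp [h1, h2] <;>
      by_cases hjl : j = l <;> simp_all
  simp only [hs]
  by_cases hjl : j = l
  · subst hjl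
    simp only [and_self, Finset.sum_ite_eq', Finset.mem_univ, if_true, one_mul]
    apply Finset.sum_congr rfl
    intro r _
    by_cases hrl : r < j
    · simp only [hrl, if_true]
      by_cases hm : max i k ≤ r
      · simp [hm, hrl]
      · rw [if_neg (by tauto)]
        rcases max_cases i k with ⟨he, _⟩ | ⟨he, _⟩ <;> rw [he] at hm <;>
          push_neg at hm
        · rw [hx (show id r < id i from hm), zero_mul]
        · rw [hx (show id r < id k from hm), mul_zero]
    · simp [hrl]
  · rw [if_neg hjl, zero_mul]
    apply Finset.sum_eq_zero
    intro s _
    rw [if_neg (fun h => hjl (h.1.symm.trans h.2))]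
end

section
/- Let 𝔤 be a 3-dimensional solvable real Lie algebra with trivial center, spanned by V, X, Y, and suppose [V, X] = αX + βY and [V, Y] = −βX + αY for real numbers α, β. Then α² + β² ≠ 0, the derived algebra [𝔤, 𝔤] equals the span of X and Y, and [X, Y] = 0. -/
/-- Let `𝔤` be a 3-dimensional solvable real Lie algebra with trivial center, spanned by
`V, X, Y`, with `[V,X] = αX + βY` and `[V,Y] = −βX + αY`.  Then `α² + β² ≠ 0`, the derived
algebra `[𝔤,𝔤]` is the span of `X` and `Y`, and `[X,Y] = 0`. -/
theorem solvable_centerless_conformal_brackets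
    (L : Type*) [LieRing L] [LieAlgebra ℝ L] (hdim : Module.finrank ℝ L = 3)
    [LieAlgebra.IsSolvable L] (hcenter : LieAlgebra.center ℝ L = ⊥)
    (V X Y : L) (hspan : Submodule.span ℝ {V, X, Y} = ⊤)
    (α β : ℝ) (hVX : ⁅V, X⁆ = α • X + β • Y) (hVY : ⁅V, Y⁆ = -β • X + α • Y) :
    α ^ 2 + β ^ 2 ≠ 0 ∧
      LieSubmodule.toSubmodule ⁅(⊤ : LieIdeal ℝ L), (⊤ : LieIdeal ℝ L)⁆ =
        Submodule.span ℝ {X, Y} ∧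
      ⁅X, Y⁆ = 0 := by
  classical
  have hrange : Set.range ![V, X, Y] = ({V, X, Y} : Set L) := by
    ext z; simp [Matrix.range_cons]; tauto
  have htop : ⊤ ≤ Submodule.span ℝ (Set.range ![V, X, Y]) := by
    rw [hrange, hspan]
  have hcard : Fintype.card (Fin 3) = Module.finrank ℝ L := by simp [hdim]
  let B : Module.Basis (Fin 3) ℝ L := basisOfTopLeSpanOfCardEqFinrank ![V, X, Y] htop hcard
  have hB : ⇑B = ![V, X, Y] := by
    funext i; exact coe_basisOfTopLeSpanOfCardEqFinrank ![V, X, Y] htop hcard ▸ rfl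
  have hLI : LinearIndependent ℝ ![V, X, Y] := hB ▸ B.linearIndependent
  have key : ∀ p q r : ℝ, p • V + q • X + r • Y = 0 → p = 0 ∧ q = 0 ∧ r = 0 := by
    intro p q r h
    have := (Fintype.linearIndependent_iff.mp hLI) ![p, q, r]
      (by simpa [Fin.sum_univ_three] using h)
    exact ⟨this 0, this 1, this 2⟩
  have hVne : V ≠ 0 := by
    have := hLI.ne_zero 0; simpa using this
  have hαβ : α ^ 2 + β ^ 2 ≠ 0 := by
    intro h
    have hα : α = 0 := by nlinarith [sq_nonneg α, sq_nonneg β]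
    have hβ : β = 0 := by nlinarith [sq_nonneg α, sq_nonneg β]
    have hVcen : V ∈ LieAlgebra.center ℝ L := by
      rw [LieAlgebra.center, LieModule.mem_maxTrivSubmodule]
      intro w
      have hw : w ∈ Submodule.span ℝ ({V, X, Y} : Set L) := hspan ▸ Submodule.mem_top
      have hsub : ({V, X, Y} : Set L) ⊆ ↑(LinearMap.ker ((LieAlgebra.ad ℝ L) V)) := by
        intro z hz
        rcases hz with rfl | rfl | rfl <;>
          simp [LieAlgebra.ad_apply, hVX, hVY, hα, hβ]
      have hVw : ⁅V, w⁆ = 0 := Submodule.span_le.mpr hsub hw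
      rw [← lie_skew, hVw, neg_zero]
    rw [hcenter] at hVcen
    exact hVne (by simpa using hVcen)
  set D : LieIdeal ℝ L := ⁅(⊤ : LieIdeal ℝ L), (⊤ : LieIdeal ℝ L)⁆ with hD
  have hVXmem : ⁅V, X⁆ ∈ D := LieSubmodule.lie_mem_lie trivial trivial
  have hVYmem : ⁅V, Y⁆ ∈ D := LieSubmodule.lie_mem_lie trivial trivial
  have hXYmem : ⁅X, Y⁆ ∈ D := LieSubmodule.lie_mem_lie trivial trivial
  have hXmem : X ∈ D := by
    have hx : ((α ^ 2 + β ^ 2)⁻¹ * α) • ⁅V, X⁆ + (-((α ^ 2 + β ^ 2)⁻¹ * β)) • ⁅V, Y⁆ = X := by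
      rw [hVX, hVY]; match_scalars <;> field_simp <;> ring
    exact hx ▸ D.add_mem (D.smul_mem _ hVXmem) (D.smul_mem _ hVYmem)
  have hYmem : Y ∈ D := by
    have hy : ((α ^ 2 + β ^ 2)⁻¹ * β) • ⁅V, X⁆ + ((α ^ 2 + β ^ 2)⁻¹ * α) • ⁅V, Y⁆ = Y := by
      rw [hVX, hVY]; match_scalars <;> field_simp <;> ring
    exact hy ▸ D.add_mem (D.smul_mem _ hVXmem) (D.smul_mem _ hVYmem)
  obtain ⟨a, b, c, hXY⟩ : ∃ a b c : ℝ, ⁅X, Y⁆ = a • V + b • X + c • Y := by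
    have h : ⁅X, Y⁆ ∈ Submodule.span ℝ (Set.range ![V, X, Y]) := by
      rw [hrange, hspan]; trivial
    rw [Submodule.mem_span_range_iff_exists_fun] at h
    obtain ⟨g, hg⟩ := h
    exact ⟨g 0, g 1, g 2, by rw [← hg]; simp [Fin.sum_univ_three]⟩
  have jac : ⁅V, ⁅X, Y⁆⁆ = ⁅⁅V, X⁆, Y⁆ + ⁅X, ⁅V, Y⁆⁆ := leibniz_lie V X Y
  have e1 : ⁅V, ⁅X, Y⁆⁆ = (b * α - c * β) • X + (b * β + c * α) • Y := by
    rw [hXY]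
    simp only [lie_add, lie_smul, hVX, hVY, lie_self, smul_zero]
    module
  have e2 : ⁅⁅V, X⁆, Y⁆ + ⁅X, ⁅V, Y⁆⁆ = (2 * α * a) • V + (2 * α * b) • X + (2 * α * c) • Y := by
    rw [hVX, hVY]
    simp only [add_lie, smul_lie, lie_add, lie_smul, lie_self, smul_zero, hXY]
    module
  have heq : (2 * α * a) • V + (2 * α * b - (b * α - c * β)) • X
      + (2 * α * c - (b * β + c * α)) • Y = 0 := by
    have h := jac; rw [e1, e2] at h
    rw [eq_comm, ← sub_eq_zero] at h
    rw [← h]; module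
  obtain ⟨h1, h2, h3⟩ := key _ _ _ heq
  have hq : α * b + β * c = 0 := by linear_combination h2
  have hr : α * c - β * b = 0 := by linear_combination h3
  have hb : b = 0 := by
    have hbb : (α ^ 2 + β ^ 2) * b = 0 := by linear_combination α * hq - β * hr
    exact (mul_eq_zero.mp hbb).resolve_left hαβ
  have hc : c = 0 := by
    have hcc : (α ^ 2 + β ^ 2) * c = 0 := by linear_combination β * hq + α * hr
    exact (mul_eq_zero.mp hcc).resolve_left hαβ
  have ha : a = 0 := by
    by_contra ha
    have hVmem : V ∈ D := by
      have hv : a⁻¹ • ⁅X, Y⁆ = V := by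
        rw [hXY, hb, hc]; match_scalars <;> field_simp <;> simp
      exact hv ▸ D.smul_mem _ hXYmem
    have hDtop : D = ⊤ := by
      rw [← LieSubmodule.toSubmodule_eq_top, eq_top_iff, ← hspan]
      refine Submodule.span_le.mpr ?_
      rintro z (rfl | rfl | rfl)
      exacts [hVmem, hXmem, hYmem]
    have hall : ∀ k, LieAlgebra.derivedSeries ℝ L k = ⊤ := by
      intro k; induction k with
      | zero => rfl
      | succ n ih =>
        have hstep : LieAlgebra.derivedSeries ℝ L (n + 1)
            = ⁅LieAlgebra.derivedSeries ℝ L n, LieAlgebra.derivedSeries ℝ L n⁆ := by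
          rw [LieAlgebra.derivedSeries_def, LieAlgebra.derivedSeriesOfIdeal_succ,
            ← LieAlgebra.derivedSeries_def]
        rw [hstep, ih, ← hD, hDtop]
    obtain ⟨k, hk⟩ := LieAlgebra.IsSolvable.solvable ℝ L
    rw [hall k] at hk
    have : V ∈ (⊥ : LieIdeal ℝ L) := hk ▸ LieSubmodule.mem_top V
    exact hVne ((LieSubmodule.mem_bot V).mp this)
  have hXY0 : ⁅X, Y⁆ = 0 := by rw [hXY, ha, hb, hc]; simp
  refine ⟨hαβ, ?_, hXY0⟩
  apply le_antisymm
  · set S : Submodule ℝ L := Submodule.span ℝ ({X, Y} : Set L) with hS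
    have hXS : X ∈ S := Submodule.subset_span (by simp)
    have hYS : Y ∈ S := Submodule.subset_span (by simp)
    have hmemS : ∀ u ∈ ({V, X, Y} : Set L), ∀ z ∈ ({V, X, Y} : Set L), ⁅z, u⁆ ∈ S := by
      rintro u (rfl | rfl | rfl) z (rfl | rfl | rfl) <;>
        first
          | (rw [lie_self]; exact S.zero_mem)
          | (rw [hVX]; exact S.add_mem (S.smul_mem _ hXS) (S.smul_mem _ hYS))
          | (rw [hVY]; exact S.add_mem (S.smul_mem _ hXS) (S.smul_mem _ hYS))
          | (rw [hXY0]; exact S.zero_mem)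
          | (rw [← lie_skew, hVX]; exact S.neg_mem (S.add_mem (S.smul_mem _ hXS) (S.smul_mem _ hYS)))
          | (rw [← lie_skew, hVY]; exact S.neg_mem (S.add_mem (S.smul_mem _ hXS) (S.smul_mem _ hYS)))
          | (rw [← lie_skew, hXY0]; simp)
    have hgen : ∀ z ∈ ({V, X, Y} : Set L), ∀ w : L, ⁅z, w⁆ ∈ S := by
      intro z hz w
      have hw : w ∈ Submodule.span ℝ ({V, X, Y} : Set L) := hspan ▸ Submodule.mem_top
      have hsub : ({V, X, Y} : Set L) ⊆ ↑(S.comap ((LieAlgebra.ad ℝ L) z)) := by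
        intro u hu
        simp only [SetLike.mem_coe, Submodule.mem_comap, LieAlgebra.ad_apply]
        exact hmemS u hu z hz
      exact Submodule.span_le.mpr hsub hw
    have hall2 : ∀ z w : L, ⁅z, w⁆ ∈ S := by
      intro z w
      have hz : z ∈ Submodule.span ℝ ({V, X, Y} : Set L) := hspan ▸ Submodule.mem_top
      have hsub : ({V, X, Y} : Set L) ⊆ ↑(S.comap (-((LieAlgebra.ad ℝ L) w))) := by
        intro u hu
        simp only [SetLike.mem_coe, Submodule.mem_comap, LinearMap.neg_apply,
          LieAlgebra.ad_apply, lie_skew]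
        exact hgen u hu w
      have h' : -⁅w, z⁆ ∈ S := Submodule.span_le.mpr hsub hz
      rwa [lie_skew] at h'
    rw [LieSubmodule.lieIdeal_oper_eq_linear_span]
    refine Submodule.span_le.mpr ?_
    rintro _ ⟨x, y, rfl⟩
    exact hall2 x y
  · refine Submodule.span_le.mpr ?_
    rintro z (rfl | rfl)
    · simpa using hXmem
    · simpa using hYmem
end
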